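/- Let A = ℚ⟨y₁, y₂, y₃⟩ be the free graded ℚ-algebra with each yᵣ in degree 1, and suppose Δ : A → A ⊗ A is a ℚ-algebra homomorphism such that Δ(yᵣ) = yᵣ ⊗ 1 + 1 ⊗ yᵣ + fᵣ for each r, where each fᵣ lies in ⊕_{i,j ≥ 1} Aᵢ ⊗ Aⱼ, and f₁ + f₂ + f₃ = 0. Then the degree-(1,1) component of Δ(y₃y₂ + y₃y₁ + y₂y₁) − (1 ⊗ e₂ + e₁ ⊗ e₁ + e₂ ⊗ 1) equals −(y₃ ⊗ y₃ + y₂ ⊗ y₂ + y₁ ⊗ y₁), where e₁ = y₁+y₂+y₃ and e₂ = y₃y₂ + y₃y₁ + y₂y₁; in particular it is nonzero, so Δ(e₂) ≠ 1 ⊗ e₂ + e₁ ⊗ e₁ + e₂ ⊗ 1. -/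

import Mathlib

open TensorProduct

noncomputable section

abbrev A3 := FreeAlgebra ℚ (Fin 3)

def y (r : Fin 3) : A3 := FreeAlgebra.ι ℚ r

/-- The degree-1 part of the free algebra. -/
def A3one : Submodule ℚ A3 := Submodule.span ℚ (Set.range (FreeAlgebra.ι ℚ))

/-- The degree-n part of the free algebra. -/
def deg (n : ℕ) : Submodule ℚ A3 := A3one ^ n

/-- The bidegree-(i,j) part of A ⊗ A. -/
def P (i j : ℕ) : Submodule ℚ (A3 ⊗[ℚ] A3) :=
  LinearMap.range (TensorProduct.map (deg i).subtype (deg j).subtype)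

def e1 : A3 := y 0 + y 1 + y 2
def e2 : A3 := y 2 * y 1 + y 2 * y 0 + y 1 * y 0

-- auxiliary material

def Shigh : Submodule ℚ (A3 ⊗[ℚ] A3) :=
  ⨆ (p : ℕ × ℕ) (_ : 3 ≤ p.1 + p.2 ∧ 1 ≤ p.1 ∧ 1 ≤ p.2), P p.1 p.2

def Tpos : Submodule ℚ (A3 ⊗[ℚ] A3) :=
  ⨆ (p : ℕ × ℕ) (_ : 1 ≤ p.1 ∧ 1 ≤ p.2), P p.1 p.2

lemma mem_P {i j : ℕ} {a b : A3} (ha : a ∈ deg i) (hb : b ∈ deg j) :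
    a ⊗ₜ[ℚ] b ∈ P i j :=
  ⟨(⟨a, ha⟩ : deg i) ⊗ₜ[ℚ] (⟨b, hb⟩ : deg j), by simp⟩

lemma y_mem_deg1 (r : Fin 3) : y r ∈ deg 1 := by
  rw [deg, pow_one]
  exact Submodule.subset_span ⟨r, rfl⟩

lemma one_mem_deg0 : (1 : A3) ∈ deg 0 := by
  rw [deg, pow_zero]
  exact Submodule.one_le.mp le_rfl

lemma P_mul_aux {i j k l : ℕ} {a b : A3} (ha : a ∈ deg i) (hb : b ∈ deg j)
    {v : A3 ⊗[ℚ] A3} (hv : v ∈ P k l) : (a ⊗ₜ[ℚ] b) * v ∈ P (i + k) (j + l) := by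
  rw [P, TensorProduct.range_map_eq_span_tmul] at hv
  induction hv using Submodule.span_induction with
  | mem x hx =>
      obtain ⟨c, d, rfl⟩ := hx
      rw [Algebra.TensorProduct.tmul_mul_tmul]
      refine mem_P ?_ ?_
      · rw [deg, pow_add]; exact Submodule.mul_mem_mul ha c.2
      · rw [deg, pow_add]; exact Submodule.mul_mem_mul hb d.2
  | zero => rw [mul_zero]; exact zero_mem _
  | add x y hx hy ihx ihy => rw [mul_add]; exact add_mem ihx ihy
  | smul c x hx ih => rw [mul_smul_comm]; exact Submodule.smul_mem _ _ ih

lemma P_mul {i j k l : ℕ} {u v : A3 ⊗[ℚ] A3} (hu : u ∈ P i j) (hv : v ∈ P k l) :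
    u * v ∈ P (i + k) (j + l) := by
  rw [P, TensorProduct.range_map_eq_span_tmul] at hu
  induction hu using Submodule.span_induction with
  | mem x hx =>
      obtain ⟨c, d, rfl⟩ := hx
      exact P_mul_aux c.2 d.2 hv
  | zero => rw [zero_mul]; exact zero_mem _
  | add x y hx hy ihx ihy => rw [add_mul]; exact add_mem ihx ihy
  | smul c x hx ih => rw [smul_mul_assoc]; exact Submodule.smul_mem _ _ ih

lemma P_le_Shigh {i j : ℕ} (h : 3 ≤ i + j ∧ 1 ≤ i ∧ 1 ≤ j) : P i j ≤ Shigh :=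
  le_iSup_of_le (i, j) (le_iSup_of_le h le_rfl)

lemma w_mul_Tpos {a b : ℕ} {w : A3 ⊗[ℚ] A3} (hw : w ∈ P a b) (hab : a + b = 1)
    {g : A3 ⊗[ℚ] A3} (hg : g ∈ Tpos) : w * g ∈ Shigh := by
  have : Tpos ≤ Shigh.comap (LinearMap.mulLeft ℚ w) := by
    refine iSup_le fun p => iSup_le fun hp x hx => ?_
    exact P_le_Shigh (by omega) (P_mul hw hx)
  exact this hg

lemma Tpos_mul_w {a b : ℕ} {w : A3 ⊗[ℚ] A3} (hw : w ∈ P a b) (hab : a + b = 1)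
    {g : A3 ⊗[ℚ] A3} (hg : g ∈ Tpos) : g * w ∈ Shigh := by
  have : Tpos ≤ Shigh.comap (LinearMap.mulRight ℚ w) := by
    refine iSup_le fun p => iSup_le fun hp x hx => ?_
    exact P_le_Shigh (by omega) (P_mul hx hw)
  exact this hg

lemma Tpos_mul_Tpos {g g' : A3 ⊗[ℚ] A3} (hg : g ∈ Tpos) (hg' : g' ∈ Tpos) :
    g * g' ∈ Shigh := by
  have : Tpos ≤ Shigh.comap (LinearMap.mulRight ℚ g') := by
    refine iSup_le fun p => iSup_le fun hp x hx => ?_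
    have : Tpos ≤ Shigh.comap (LinearMap.mulLeft ℚ x) := by
      refine iSup_le fun q => iSup_le fun hq z hz => ?_
      exact P_le_Shigh (by omega) (P_mul hx hz)
    exact this hg'
  exact this hg

-- the linear functional picking out the (1,1)-component pairing

def ψ : A3 →ₐ[ℚ] Polynomial ℚ := FreeAlgebra.lift ℚ (fun _ => Polynomial.X)

def φ : A3 →ₗ[ℚ] ℚ := (Polynomial.lcoeff ℚ 1) ∘ₗ ψ.toLinearMap

def Pi2 : (A3 ⊗[ℚ] A3) →ₗ[ℚ] ℚ := (LinearMap.mul' ℚ ℚ) ∘ₗ (TensorProduct.map φ φ)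

lemma pow_span_X (n : ℕ) :
    (Submodule.span ℚ {Polynomial.X (R := ℚ)}) ^ n ≤ Submodule.span ℚ {Polynomial.X ^ n} := by
  induction n with
  | zero =>
      rw [pow_zero, pow_zero]
      rw [Submodule.one_eq_span]
  | succ n ih =>
      rw [pow_succ, pow_succ]
      calc (Submodule.span ℚ {Polynomial.X (R := ℚ)}) ^ n * Submodule.span ℚ {Polynomial.X}
          ≤ Submodule.span ℚ {Polynomial.X ^ n} * Submodule.span ℚ {Polynomial.X} :=
            mul_le_mul' ih le_rfl
        _ ≤ Submodule.span ℚ {Polynomial.X ^ n * Polynomial.X} := by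
            rw [Submodule.span_mul_span, Set.singleton_mul_singleton]

lemma φ_deg {n : ℕ} (hn : n ≠ 1) {x : A3} (hx : x ∈ deg n) : φ x = 0 := by
  have h1 : Submodule.map ψ.toLinearMap A3one ≤ Submodule.span ℚ {Polynomial.X} := by
    rw [A3one, Submodule.map_span]
    refine Submodule.span_le.mpr ?_
    rintro _ ⟨_, ⟨r, rfl⟩, rfl⟩
    simp only [AlgHom.toLinearMap_apply, ψ, FreeAlgebra.lift_ι_apply]
    exact Submodule.mem_span_singleton_self _
  have h2 : ψ x ∈ Submodule.span ℚ {Polynomial.X ^ n} := by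
    have : ψ x ∈ Submodule.map ψ.toLinearMap (deg n) := ⟨x, hx, rfl⟩
    rw [deg, Submodule.map_pow] at this
    exact pow_span_X n (by
      refine (pow_le_pow_left' ?_ n : Submodule.map ψ.toLinearMap A3one ^ n ≤ _) this
      exact h1)
  obtain ⟨c, hc⟩ := Submodule.mem_span_singleton.mp h2
  have : φ x = Polynomial.coeff (ψ x) 1 := rfl
  rw [this, ← hc]
  simp [Polynomial.coeff_X_pow, hn, Ne.symm hn]

lemma φ_y (r : Fin 3) : φ (y r) = 1 := by
  simp [φ, y, ψ, FreeAlgebra.lift_ι_apply]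

lemma Pi2_P {i j : ℕ} (h : i ≠ 1 ∨ j ≠ 1) : P i j ≤ LinearMap.ker Pi2 := by
  rintro x ⟨z, rfl⟩
  rw [LinearMap.mem_ker, ← LinearMap.comp_apply]
  have hC : (Pi2 ∘ₗ TensorProduct.map (deg i).subtype (deg j).subtype) = 0 := by
    apply TensorProduct.ext'
    intro a b
    have : Pi2 ((a : A3) ⊗ₜ[ℚ] (b : A3)) = φ a * φ b := by
      simp [Pi2, LinearMap.mul'_apply]
    rcases h with h | h
    · simp [this, φ_deg h a.2]
    · simp [this, φ_deg h b.2]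
  rw [hC]
  rfl

lemma Shigh_le_ker : Shigh ≤ LinearMap.ker Pi2 := by
  refine iSup_le fun p => iSup_le fun hp => Pi2_P (by omega)

lemma Pi2_diag :
    Pi2 (y 2 ⊗ₜ[ℚ] y 2 + y 1 ⊗ₜ[ℚ] y 1 + y 0 ⊗ₜ[ℚ] y 0) = 3 := by
  simp [Pi2, LinearMap.mul'_apply, φ_y]
  norm_num

/-- If Δ(yᵣ) = yᵣ⊗1 + 1⊗yᵣ + fᵣ with fᵣ ∈ ⊕_{i,j≥1} Aᵢ⊗Aⱼ and f₁+f₂+f₃ = 0,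
then the (1,1)-component of Δ(e₂) − (1⊗e₂ + e₁⊗e₁ + e₂⊗1) is
−(y₃⊗y₃ + y₂⊗y₂ + y₁⊗y₁); in particular Δ(e₂) ≠ 1⊗e₂ + e₁⊗e₁ + e₂⊗1. -/
theorem stmt9 (Δ : A3 →ₐ[ℚ] A3 ⊗[ℚ] A3) (f : Fin 3 → A3 ⊗[ℚ] A3)
    (hf : ∀ r, f r ∈ ⨆ (p : ℕ × ℕ) (_ : 1 ≤ p.1 ∧ 1 ≤ p.2), P p.1 p.2)
    (hΔ : ∀ r, Δ (y r) = y r ⊗ₜ[ℚ] 1 + 1 ⊗ₜ[ℚ] y r + f r)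
    (hsum : f 0 + f 1 + f 2 = 0) :
    (∃ u ∈ ⨆ (p : ℕ × ℕ) (_ : 3 ≤ p.1 + p.2 ∧ 1 ≤ p.1 ∧ 1 ≤ p.2), P p.1 p.2,
      Δ e2 - (1 ⊗ₜ[ℚ] e2 + e1 ⊗ₜ[ℚ] e1 + e2 ⊗ₜ[ℚ] 1) =
        u - (y 2 ⊗ₜ[ℚ] y 2 + y 1 ⊗ₜ[ℚ] y 1 + y 0 ⊗ₜ[ℚ] y 0)) ∧
    Δ e2 ≠ 1 ⊗ₜ[ℚ] e2 + e1 ⊗ₜ[ℚ] e1 + e2 ⊗ₜ[ℚ] 1 := by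
  have hf' : ∀ r, f r ∈ Tpos := hf
  have hyL : ∀ r : Fin 3, (y r ⊗ₜ[ℚ] (1 : A3)) ∈ P 1 0 := fun r => mem_P (y_mem_deg1 r) one_mem_deg0
  have hyR : ∀ r : Fin 3, ((1 : A3) ⊗ₜ[ℚ] y r) ∈ P 0 1 := fun r => mem_P one_mem_deg0 (y_mem_deg1 r)
  set u : A3 ⊗[ℚ] A3 :=
    ((y 2 ⊗ₜ[ℚ] (1:A3)) * f 1 + ((1:A3) ⊗ₜ[ℚ] y 2) * f 1 + f 2 * (y 1 ⊗ₜ[ℚ] (1:A3)) +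
      f 2 * ((1:A3) ⊗ₜ[ℚ] y 1) + f 2 * f 1) +
    ((y 2 ⊗ₜ[ℚ] (1:A3)) * f 0 + ((1:A3) ⊗ₜ[ℚ] y 2) * f 0 + f 2 * (y 0 ⊗ₜ[ℚ] (1:A3)) +
      f 2 * ((1:A3) ⊗ₜ[ℚ] y 0) + f 2 * f 0) +
    ((y 1 ⊗ₜ[ℚ] (1:A3)) * f 0 + ((1:A3) ⊗ₜ[ℚ] y 1) * f 0 + f 1 * (y 0 ⊗ₜ[ℚ] (1:A3)) +
      f 1 * ((1:A3) ⊗ₜ[ℚ] y 0) + f 1 * f 0) with hu_def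
  have hu : u ∈ Shigh := by
    refine add_mem (add_mem ?_ ?_) ?_ <;>
    · refine add_mem (add_mem (add_mem (add_mem ?_ ?_) ?_) ?_) ?_
      · exact w_mul_Tpos (hyL _) rfl (hf' _)
      · exact w_mul_Tpos (hyR _) rfl (hf' _)
      · exact Tpos_mul_w (hyL _) rfl (hf' _)
      · exact Tpos_mul_w (hyR _) rfl (hf' _)
      · exact Tpos_mul_Tpos (hf' _) (hf' _)
  have key : Δ e2 - (1 ⊗ₜ[ℚ] e2 + e1 ⊗ₜ[ℚ] e1 + e2 ⊗ₜ[ℚ] 1) =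
      u - (y 2 ⊗ₜ[ℚ] y 2 + y 1 ⊗ₜ[ℚ] y 1 + y 0 ⊗ₜ[ℚ] y 0) := by
    rw [hu_def]
    simp only [e1, e2, map_add, map_mul, hΔ]
    simp only [add_mul, mul_add, Algebra.TensorProduct.tmul_mul_tmul, one_mul, mul_one,
      tmul_add, add_tmul]
    abel
  refine ⟨⟨u, hu, key⟩, ?_⟩
  intro h
  rw [h, sub_self] at key
  have hdiag : u = (y 2 ⊗ₜ[ℚ] y 2 + y 1 ⊗ₜ[ℚ] y 1 + y 0 ⊗ₜ[ℚ] y 0) := by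
    have := key.symm
    rwa [sub_eq_zero] at this
  have h0 : Pi2 u = 0 := Shigh_le_ker hu
  have h3 : Pi2 u = 3 := by rw [hdiag]; exact Pi2_diag
  rw [h0] at h3
  norm_num at h3

end
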